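/- arXiv:2012.04739 — 3 statements merged into one kernel-verified Lean document; each statement's English description precedes it below -/
import Mathlib

section
/- Let G be a two-level tree synchronisation topology of live-reset components with root R and children M1,…,Mn (children pairwise share no actions). If a proposition p is reachable in the sum-of-squares product SQ(G), then p is reachable in the full asynchronous product R || M1 || … || Mn: replacing each square state (s_i, s_R) by the global state having s_R in the root coordinate, s_i in coordinate i, and initial states elsewhere maps runs of SQ(G) to runs of G. -/
/-- A Labelled Transition System. -/
structure LTS (S A P : Type) where
  init : S
  acts : Set A
  tr : S → A → S → Prop
  label : S → Set P

namespace LTS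

/-- Transition relation of the asynchronous product of two LTSs. -/
def asyncTr {S1 S2 A P : Type} (M1 : LTS S1 A P) (M2 : LTS S2 A P) :
    S1 × S2 → A → S1 × S2 → Prop := fun s a s' =>
  (a ∈ M1.acts ∧ a ∉ M2.acts ∧ M1.tr s.1 a s'.1 ∧ s'.2 = s.2) ∨
  (a ∈ M2.acts ∧ a ∉ M1.acts ∧ M2.tr s.2 a s'.2 ∧ s'.1 = s.1) ∨
  (a ∈ M1.acts ∧ a ∈ M2.acts ∧ M1.tr s.1 a s'.1 ∧ M2.tr s.2 a s'.2)

/-- Asynchronous product of two LTSs. -/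
def asyncProd {S1 S2 A P : Type} (M1 : LTS S1 A P) (M2 : LTS S2 A P) :
    LTS (S1 × S2) A P where
  init := (M1.init, M2.init)
  acts := M1.acts ∪ M2.acts
  tr := asyncTr M1 M2
  label := fun s => M1.label s.1 ∪ M2.label s.2

/-- One step of an LTS (via some action of the LTS). -/
def Step {S A P : Type} (M : LTS S A P) (s s' : S) : Prop :=
  ∃ a ∈ M.acts, M.tr s a s'

/-- Finite reachability from the initial state. -/
def Reachable {S A P : Type} (M : LTS S A P) (s : S) : Prop :=
  Relation.ReflTransGen M.Step M.init s

/-- `ρ, α` form an infinite run of `M`. -/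
def IsRun {S A P : Type} (M : LTS S A P) (ρ : ℕ → S) (α : ℕ → A) : Prop :=
  ∀ n, α n ∈ M.acts ∧ M.tr (ρ n) (α n) (ρ (n + 1))

/-- `EF p`: some infinite run from the initial state visits a state labelled `p`. -/
def EF {S A P : Type} (M : LTS S A P) (p : P) : Prop :=
  ∃ ρ α, ρ 0 = M.init ∧ M.IsRun ρ α ∧ ∃ n, p ∈ M.label (ρ n)

/-- `EG p`: some infinite run from the initial state has `p` at every state. -/
def EG {S A P : Type} (M : LTS S A P) (p : P) : Prop :=
  ∃ ρ α, ρ 0 = M.init ∧ M.IsRun ρ α ∧ ∀ n, p ∈ M.label (ρ n)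

/-- A state is locked w.r.t. a set `B` of actions iff no infinite run from it
fires an action from `B`. -/
def LockedWrt {S A P : Type} (M : LTS S A P) (B : Set A) (s : S) : Prop :=
  ¬ ∃ (ρ : ℕ → S) (α : ℕ → A), ρ 0 = s ∧ M.IsRun ρ α ∧ ∃ n, α n ∈ B

end LTS

section TwoLevel

variable {SR A P : Type} {n : ℕ} {T : Fin n → Type}

/-- Transition relation of the asynchronous product of a root `R` and children `N`. -/
def netTr (R : LTS SR A P) (N : ∀ i, LTS (T i) A P) :
    (SR × ∀ i, T i) → A → (SR × ∀ i, T i) → Prop := fun s a s' =>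
  (a ∈ R.acts ∨ ∃ i, a ∈ (N i).acts) ∧
  ((a ∈ R.acts ∧ R.tr s.1 a s'.1) ∨ (a ∉ R.acts ∧ s'.1 = s.1)) ∧
  ∀ i, (a ∈ (N i).acts ∧ (N i).tr (s.2 i) a (s'.2 i)) ∨ (a ∉ (N i).acts ∧ s'.2 i = s.2 i)

/-- Asynchronous product of the whole two-level network `R ‖ N 0 ‖ … ‖ N (n-1)`. -/
def netLTS (R : LTS SR A P) (N : ∀ i, LTS (T i) A P) : LTS (SR × ∀ i, T i) A P where
  init := (R.init, fun i => (N i).init)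
  acts := R.acts ∪ ⋃ i, (N i).acts
  tr := netTr R N
  label := fun s => R.label s.1 ∪ ⋃ i, (N i).label (s.2 i)

/-- A child is live-reset w.r.t. its parent: every transition over a shared
(upstream) action leads to the child's initial state. -/
def LiveResetChild {T0 : Type} (R : LTS SR A P) (M : LTS T0 A P) : Prop :=
  ∀ s a s', a ∈ M.acts → a ∈ R.acts → M.tr s a s' → s' = M.init

/-- Children pairwise share no actions. -/
def ChildrenDisjoint (N : ∀ i, LTS (T i) A P) : Prop :=
  ∀ i j, i ≠ j → Disjoint (N i).acts (N j).acts

/-- Transition relation of the unreduced sum-of-squares product.  `ε` is the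
fresh silent action; `none` is the fresh initial state. -/
def squTr (ε : A) (R : LTS SR A P) (N : ∀ i, LTS (T i) A P) :
    Option (Σ i, T i × SR) → A → Option (Σ i, T i × SR) → Prop := fun s a s' =>
  (s = none ∧ a = ε ∧ ∃ i, s' = some ⟨i, ((N i).init, R.init)⟩) ∨
  (∃ i si sr, s = some ⟨i, (si, sr)⟩ ∧
    ( -- local action of the child `i`
      (a ∈ (N i).acts ∧ a ∉ R.acts ∧
        ∃ si', (N i).tr si a si' ∧ s' = some ⟨i, (si', sr)⟩) ∨
      -- local action of the root
      (a ∈ R.acts ∧ (∀ j, a ∉ (N j).acts) ∧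
        ∃ sr', R.tr sr a sr' ∧ s' = some ⟨i, (si, sr')⟩) ∨
      -- upstream synchronisation of child `i` with the root, releasing control
      (a ∈ (N i).acts ∧ a ∈ R.acts ∧ (N i).tr si a (N i).init ∧
        ∃ sr' j, R.tr sr a sr' ∧ s' = some ⟨j, ((N j).init, sr')⟩)))

/-- The unreduced sum-of-squares product `SQᵘ(G)`. -/
def SQu (ε : A) (R : LTS SR A P) (N : ∀ i, LTS (T i) A P) :
    LTS (Option (Σ i, T i × SR)) A P where
  init := none
  acts := insert ε (R.acts ∪ ⋃ i, (N i).acts)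
  tr := squTr ε R N
  label := fun s => match s with
    | none => ∅
    | some ⟨i, (si, sr)⟩ => (N i).label si ∪ R.label sr

/-- The sum-of-squares product `SQ(G)`: `SQᵘ(G)` with the locked states removed
(transitions are restricted to non-locked endpoints). -/
def SQ (ε : A) (R : LTS SR A P) (N : ∀ i, LTS (T i) A P) :
    LTS (Option (Σ i, T i × SR)) A P :=
  { SQu ε R N with
    tr := fun s a s' => (SQu ε R N).tr s a s' ∧
      ¬ (SQu ε R N).LockedWrt R.acts s ∧ ¬ (SQu ε R N).LockedWrt R.acts s' }

/-- `cmpl M U`: redirect every transition labelled by an action of `U`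
(the upstream actions of the root) to the initial state. -/
def cmpl {S : Type} (M : LTS S A P) (U : Set A) : LTS S A P :=
  { M with
    tr := fun s a s' =>
      (a ∉ U ∧ M.tr s a s') ∨ (a ∈ U ∧ (∃ t, M.tr s a t) ∧ s' = M.init) }

end TwoLevel

/-- The global state of the full product corresponding to a square state:
`s_R` at the root coordinate, `s_i` at coordinate `i`, initial states
elsewhere. -/
def globalOf {n : ℕ} {SR A P : Type} {T : Fin n → Type}
    (R : LTS SR A P) (N : ∀ i, LTS (T i) A P)
    (i : Fin n) (si : T i) (sr : SR) : SR × ∀ j, T j :=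
  (sr, Function.update (fun j => (N j).init) i si)

/-- for a two-level live-reset tree topology whose children
pairwise share no actions, if `p` is reachable in the sum-of-squares product
`SQ(G)` then `p` is reachable in the full asynchronous product; indeed
replacing each square state `(s_i, s_R)` by the corresponding global state
maps runs of `SQ(G)` to runs of the full product. -/
theorem sq_preserves_EF_backward {n : ℕ} {SR A P : Type} {T : Fin n → Type}
    (R : LTS SR A P) (N : ∀ i, LTS (T i) A P) (ε : A)
    (hε : ε ∉ R.acts ∪ ⋃ i, (N i).acts)
    (hlr : ∀ i, LiveResetChild R (N i))
    (hdisj : ChildrenDisjoint N) (p : P) :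
    ((SQ ε R N).EF p → (netLTS R N).EF p) ∧
    (∀ (ρ : ℕ → Option (Σ i, T i × SR)) (α : ℕ → A),
      (SQ ε R N).IsRun ρ α →
      (∀ k i si sr, ρ k = some ⟨i, (si, sr)⟩ → α k ≠ ε →
        ∀ i' si' sr', ρ (k + 1) = some ⟨i', (si', sr')⟩ →
          (netLTS R N).tr (globalOf R N i si sr) (α k)
            (globalOf R N i' si' sr'))) := by
  classical
  -- key lemma: a non-ε step of SQᵘ between `some` states maps to a net step
  have key : ∀ (a : A) (i : Fin n) (si : T i) (sr : SR) (i' : Fin n) (si' : T i') (sr' : SR),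
      a ≠ ε →
      squTr ε R N (some ⟨i, (si, sr)⟩) a (some ⟨i', (si', sr')⟩) →
      (netLTS R N).tr (globalOf R N i si sr) a (globalOf R N i' si' sr') := by
    intro a i si sr i' si' sr' hne htr
    rcases htr with ⟨hnone, _⟩ | ⟨i0, si0, sr0, heq, hcase⟩
    · simp at hnone
    · simp only [Option.some.injEq, Sigma.mk.inj_iff] at heq
      obtain ⟨rfl, h2⟩ := heq
      rw [heq_eq_eq, Prod.mk.injEq] at h2
      obtain ⟨rfl, rfl⟩ := h2
      rcases hcase with ⟨hNi, hRa, s2, htr2, hs'⟩ | ⟨hRa, hnotN, sr2, htrR, hs'⟩ |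
        ⟨hNi, hRa, htri, sr2, j0, htrR, hs'⟩
      · -- local action of the child
        simp only [Option.some.injEq, Sigma.mk.inj_iff] at hs'
        obtain ⟨rfl, h3⟩ := hs'
        rw [heq_eq_eq, Prod.mk.injEq] at h3
        obtain ⟨rfl, rfl⟩ := h3
        refine ⟨Or.inr ⟨i', hNi⟩, Or.inr ⟨hRa, rfl⟩, fun j => ?_⟩
        by_cases hj : j = i'
        · subst hj
          exact Or.inl ⟨hNi, by
            simpa [globalOf, Function.update_self] using htr2⟩
        · refine Or.inr ⟨Set.disjoint_right.mp (hdisj j i' hj) hNi, ?_⟩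
          simp [globalOf, Function.update_of_ne hj]
      · -- local action of the root
        simp only [Option.some.injEq, Sigma.mk.inj_iff] at hs'
        obtain ⟨rfl, h3⟩ := hs'
        rw [heq_eq_eq, Prod.mk.injEq] at h3
        obtain ⟨rfl, rfl⟩ := h3
        exact ⟨Or.inl hRa, Or.inl ⟨hRa, htrR⟩, fun j => Or.inr ⟨hnotN j, rfl⟩⟩
      · -- upstream synchronisation
        simp only [Option.some.injEq, Sigma.mk.inj_iff] at hs'
        obtain ⟨rfl, h3⟩ := hs'
        rw [heq_eq_eq, Prod.mk.injEq] at h3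
        obtain ⟨rfl, rfl⟩ := h3
        have hupd : Function.update (fun j => (N j).init) i' (N i').init
            = fun j => (N j).init := Function.update_eq_self _ _
        refine ⟨Or.inl hRa, Or.inl ⟨hRa, htrR⟩, fun j => ?_⟩
        by_cases hj : j = i
        · subst hj
          refine Or.inl ⟨hNi, ?_⟩
          simpa [globalOf, hupd, Function.update_self] using htri
        · refine Or.inr ⟨Set.disjoint_right.mp (hdisj j i hj) hNi, ?_⟩
          simp [globalOf, hupd, Function.update_of_ne hj]
  constructor
  · -- EF preservation
    rintro ⟨ρ, α, h0, hrun, m, hp⟩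
    -- the first step is the ε step from `none`
    have hstep0 := (hrun 0).2.1
    rw [h0] at hstep0
    obtain ⟨-, hα0, i0, hρ1⟩ : (none : Option (Σ i, T i × SR)) = none ∧ α 0 = ε ∧
        ∃ i, ρ 1 = some ⟨i, ((N i).init, R.init)⟩ := by
      rcases hstep0 with h | ⟨i1, si1, sr1, h, -⟩
      · exact h
      · exact (Option.some_ne_none _ (show (none : Option (Σ i, T i × SR)) = _ from h).symm).elim
    -- all later states are `some`
    have hsome : ∀ k, ∃ (i : Fin n) (si : T i) (sr : SR), ρ (k + 1) = some ⟨i, (si, sr)⟩ := by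
      intro k
      induction k with
      | zero => exact ⟨i0, (N i0).init, R.init, hρ1⟩
      | succ k ih =>
        obtain ⟨i, si, sr, hk⟩ := ih
        have hstep := (hrun (k + 1)).2.1
        rw [hk] at hstep
        rcases hstep with ⟨h, -⟩ | ⟨i1, si1, sr1, -, hcase⟩
        · simp at h
        · rcases hcase with ⟨-, -, si2, -, hs'⟩ | ⟨-, -, sr2, -, hs'⟩ |
            ⟨-, -, -, sr2, j0, -, hs'⟩
          · exact ⟨i1, si2, sr1, hs'⟩
          · exact ⟨i1, si1, sr2, hs'⟩
          · exact ⟨j0, (N j0).init, sr2, hs'⟩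
    -- later actions are not ε
    have hαne : ∀ k, α (k + 1) ≠ ε := by
      intro k hk
      obtain ⟨i, si, sr, hρk⟩ := hsome k
      have hstep := (hrun (k + 1)).2.1
      rw [hρk] at hstep
      rcases hstep with ⟨h, -⟩ | ⟨i1, si1, sr1, -, hcase⟩
      · simp at h
      · rcases hcase with ⟨hN, -⟩ | ⟨hR, -⟩ | ⟨hN, -⟩
        · exact hε (Or.inr (Set.mem_iUnion.mpr ⟨i1, hk ▸ hN⟩))
        · exact hε (Or.inl (hk ▸ hR))
        · exact hε (Or.inr (Set.mem_iUnion.mpr ⟨i1, hk ▸ hN⟩))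
    -- translate states
    let g : Option (Σ i, T i × SR) → SR × ∀ j, T j := fun s =>
      match s with
      | none => (netLTS R N).init
      | some ⟨i, (si, sr)⟩ => globalOf R N i si sr
    refine ⟨fun k => g (ρ (k + 1)), fun k => α (k + 1), ?_, ?_, ?_⟩
    · show g (ρ 1) = _
      rw [hρ1]
      show (R.init, Function.update (fun j => (N j).init) i0 (N i0).init)
        = (R.init, fun j => (N j).init)
      exact congrArg _ (Function.update_eq_self _ _)
    · intro k
      obtain ⟨i, si, sr, hk⟩ := hsome k
      obtain ⟨i', si', sr', hk1⟩ := hsome (k + 1)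
      have hacts : α (k + 1) ∈ (netLTS R N).acts := by
        have := (hrun (k + 1)).1
        have h2 : α (k + 1) ∈ insert ε (R.acts ∪ ⋃ i, (N i).acts) := this
        rcases Set.mem_insert_iff.mp h2 with h | h
        · exact absurd h (hαne k)
        · exact h
      refine ⟨hacts, ?_⟩
      have hstep := (hrun (k + 1)).2.1
      rw [hk, hk1] at hstep
      show (netLTS R N).tr (g (ρ (k + 1))) _ (g (ρ (k + 2)))
      rw [hk, hk1]
      exact key _ _ _ _ _ _ _ (hαne k) hstep
    · -- the labelled state
      rcases m with - | m
      · rw [h0] at hp; exact hp.elim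
      · obtain ⟨i, si, sr, hm⟩ := hsome m
        refine ⟨m, ?_⟩
        rw [hm] at hp
        show p ∈ (netLTS R N).label (g (ρ (m + 1)))
        rw [hm]
        show p ∈ (netLTS R N).label (globalOf R N i si sr)
        have hp' : p ∈ (N i).label si ∪ R.label sr := hp
        rcases hp' with h | h
        · refine Or.inr (Set.mem_iUnion.mpr ⟨i, ?_⟩)
          simpa [globalOf, netLTS, Function.update_self] using h
        · exact Or.inl h
  · intro ρ α hrun k i si sr hk hne i' si' sr' hk1
    have hstep := (hrun k).2.1
    rw [hk, hk1] at hstep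
    exact key _ _ _ _ _ _ _ hne hstep
end

section
/- Reachability of conjunctions is not preserved by the sum-of-squares reduction: there exists a two-level live-reset tree topology G and propositions p, q such that the full asynchronous product satisfies EF(p ∧ q) but SQ(G) does not satisfy EF(p ∧ q). -/
def Rex : LTS Unit (Option (Fin 2)) (Fin 2) :=
  ⟨(), ∅, fun _ _ _ => False, fun _ => ∅⟩

def Nex (i : Fin 2) : LTS Bool (Option (Fin 2)) (Fin 2) :=
  ⟨false, {some i}, fun _ a _ => a = some i, fun s => if s then {i} else ∅⟩

/-- reachability of conjunctions is not preserved by the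
sum-of-squares reduction: there is a two-level live-reset tree topology and
propositions `p, q` such that the full asynchronous product satisfies
`EF (p ∧ q)` (some reachable state's label contains both `p` and `q`)
but `SQ(G)` does not. -/
theorem sq_does_not_preserve_EF_conj :
    ∃ (SR : Type) (T : Fin 2 → Type) (A P : Type)
      (R : LTS SR A P) (N : ∀ i, LTS (T i) A P) (ε : A) (p q : P),
      ε ∉ R.acts ∪ ⋃ i, (N i).acts ∧
      (∀ i, LiveResetChild R (N i)) ∧
      ChildrenDisjoint N ∧
      (∃ ρ α, ρ 0 = (netLTS R N).init ∧ (netLTS R N).IsRun ρ α ∧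
        ∃ k, p ∈ (netLTS R N).label (ρ k) ∧ q ∈ (netLTS R N).label (ρ k)) ∧
      ¬ (∃ ρ α, ρ 0 = (SQ ε R N).init ∧ (SQ ε R N).IsRun ρ α ∧
        ∃ k, p ∈ (SQ ε R N).label (ρ k) ∧ q ∈ (SQ ε R N).label (ρ k)) := by
  refine ⟨Unit, fun _ => Bool, Option (Fin 2), Fin 2, Rex, Nex, none, 0, 1,
    ?_, ?_, ?_, ?_, ?_⟩
  · -- ε fresh
    intro h
    rcases h with h | h
    · exact h
    · simp only [Set.mem_iUnion] at h
      rcases h with ⟨i, hi⟩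
      exact absurd (Set.mem_singleton_iff.mp (show none ∈ ({some i} : Set (Option (Fin 2))) from hi)) (by simp)
  · -- live reset (vacuous: R has no actions)
    intro i s a s' _ hR _
    exact absurd hR (Set.notMem_empty a)
  · -- children disjoint
    intro i j hij
    rw [Set.disjoint_left]
    intro a ha hb
    simp only [Nex, Set.mem_singleton_iff] at ha hb
    subst ha
    exact hij (Option.some.inj hb)
  · -- net satisfies EF (p ∧ q)
    refine ⟨fun n => ((), fun i => if i = 0 then decide (1 ≤ n) else decide (2 ≤ n)),
      fun n => if n = 0 then some 0 else some 1, ?_, ?_, ?_⟩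
    · simp [netLTS, Rex, Nex]
    · intro n
      constructor
      · simp only [netLTS]
        right
        simp only [Set.mem_iUnion]
        by_cases hn : n = 0
        · exact ⟨0, by simp [hn, Nex]⟩
        · exact ⟨1, by simp [hn, Nex]⟩
      · refine ⟨Or.inr ?_, Or.inr ⟨Set.notMem_empty _, rfl⟩, ?_⟩
        · by_cases hn : n = 0
          · exact ⟨0, by simp [hn, Nex]⟩
          · exact ⟨1, by simp [hn, Nex]⟩
        · intro i
          by_cases hn : n = 0
          · subst hn
            fin_cases i
            · exact Or.inl ⟨by simp [Nex], by simp [Nex]⟩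
            · refine Or.inr ⟨by simp [Nex], by simp⟩
          · fin_cases i
            · refine Or.inr ⟨by simp [hn, Nex], ?_⟩
              simp only []
              have h1 : 1 ≤ n := Nat.one_le_iff_ne_zero.mpr hn
              simp [h1, Nat.le_succ_of_le h1]
            · exact Or.inl ⟨by simp [hn, Nex], by simp [hn, Nex]⟩
    · refine ⟨2, ?_, ?_⟩
      · right
        simp only [Set.mem_iUnion]
        exact ⟨0, by simp [Nex]⟩
      · right
        simp only [Set.mem_iUnion]
        exact ⟨1, by simp [Nex]⟩
  · -- SQ does not satisfy EF (p ∧ q)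
    rintro ⟨ρ, α, -, -, k, hp, hq⟩
    match hρ : ρ k with
    | none =>
        rw [hρ] at hp
        exact Set.notMem_empty _ hp
    | some ⟨i, (si, sr)⟩ =>
        rw [hρ] at hp hq
        simp only [SQ, SQu, Rex, Nex] at hp hq
        rcases hp with hp | hp
        · rcases hq with hq | hq
          · by_cases hs : si = true
            · rw [hs] at hp hq
              simp only [if_true] at hp hq
              rw [Set.mem_singleton_iff] at hp hq
              exact absurd (hp ▸ hq) (by decide)
            · simp [Bool.eq_false_iff.mpr, Bool.not_eq_true] at hs
              rw [hs] at hp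
              simp at hp
          · exact Set.notMem_empty _ hq
        · exact Set.notMem_empty _ hp
end

section
/- In a two-level live-reset tree topology where children pairwise share no actions, between two consecutive root-synchronisations of a run, the states of all children except the one about to synchronise can be assumed initial: formally, if a global state s is reachable and the child coordinate i of s equals some s_i reachable in M_i using only local actions of M_i, then the state with root coordinate s_R (the root coordinate of s), coordinate i equal to s_i, and all other children at their initial states is also reachable in the full product. -/
/-- Reachability inside a child using only its local (unshared) actions. -/
def LocalReach {SR A P T0 : Type} (R : LTS SR A P) (M : LTS T0 A P) (s : T0) : Prop :=
  Relation.ReflTransGen (fun x y => ∃ a ∈ M.acts, a ∉ R.acts ∧ M.tr x a y) M.init s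

/-- Lifting a local run of child `k` into the net, starting from any global
state whose `k`-coordinate is replaced. -/
lemma lift_local {n : ℕ} {SR A P : Type} {T : Fin n → Type}
    (R : LTS SR A P) (N : ∀ i, LTS (T i) A P)
    (hdisj : ChildrenDisjoint N) (k : Fin n) {x y : T k}
    (h : Relation.ReflTransGen
      (fun x y => ∃ a ∈ (N k).acts, a ∉ R.acts ∧ (N k).tr x a y) x y)
    (r : SR) (f : ∀ j, T j) :
    Relation.ReflTransGen (netLTS R N).Step
      (r, Function.update f k x) (r, Function.update f k y) := by
  induction h with
  | refl => exact .refl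
  | @tail b c _ hstep ih =>
      refine ih.tail ?_
      obtain ⟨a, ha, haR, htr⟩ := hstep
      refine ⟨a, Or.inr (Set.mem_iUnion.2 ⟨k, ha⟩),
        Or.inr ⟨k, ha⟩, Or.inr ⟨haR, rfl⟩, ?_⟩
      intro j
      by_cases hj : j = k
      · subst hj
        exact Or.inl ⟨ha, by simpa using htr⟩
      · exact Or.inr ⟨fun hja => Set.disjoint_left.mp (hdisj j k hj) hja ha,
          by simp [Function.update_of_ne hj]⟩

/-- The rescheduling invariant: all children of a reachable state are locally
reachable, and each "one deviating child" companion state is reachable. -/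
lemma net_invariant {n : ℕ} {SR A P : Type} {T : Fin n → Type}
    (R : LTS SR A P) (N : ∀ i, LTS (T i) A P)
    (hlr : ∀ i, LiveResetChild R (N i)) (hdisj : ChildrenDisjoint N)
    (s : SR × ∀ i, T i) (hs : (netLTS R N).Reachable s) :
    (∀ j, LocalReach R (N j) (s.2 j)) ∧
    ∀ i, (netLTS R N).Reachable
      (s.1, Function.update (fun j => (N j).init) i (s.2 i)) := by
  induction hs with
  | refl =>
      refine ⟨fun j => .refl, fun i => ?_⟩
      have : (Function.update (fun j => (N j).init) i ((netLTS R N).init.2 i))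
          = fun j => (N j).init := by
        funext j; by_cases hj : j = i
        · subst hj; simp [netLTS]
        · simp [Function.update_of_ne hj]
      rw [show ((netLTS R N).init.1, Function.update (fun j => (N j).init) i
        ((netLTS R N).init.2 i)) = (netLTS R N).init by
          rw [this]; rfl]
      exact .refl
  | @tail b c _ hstep ih =>
      obtain ⟨a, hacts, h1, h2, h3⟩ := hstep
      have hloc : ∀ j, LocalReach R (N j) (c.2 j) := by
        intro j
        rcases h3 j with ⟨haj, htrj⟩ | ⟨_, heq⟩
        · by_cases haR : a ∈ R.acts
          · rw [hlr j _ _ _ haj haR htrj]; exact .refl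
          · exact (ih.1 j).tail ⟨a, haj, haR, htrj⟩
        · rw [heq]; exact ih.1 j
      refine ⟨hloc, ?_⟩
      intro i
      by_cases haR : a ∈ R.acts
      · have htrR : R.tr b.1 a c.1 := by
          rcases h2 with ⟨_, h⟩ | ⟨h, _⟩
          · exact h
          · exact absurd haR h
        by_cases hex : ∃ k, a ∈ (N k).acts
        · obtain ⟨k, hk⟩ := hex
          have htrk : (N k).tr (b.2 k) a (c.2 k) := by
            rcases h3 k with ⟨_, h⟩ | ⟨h, _⟩
            · exact h
            · exact absurd hk h
          have hck : c.2 k = (N k).init := hlr k _ _ _ hk haR htrk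
          have hnot : ∀ j, j ≠ k → a ∉ (N j).acts := fun j hj hja =>
            Set.disjoint_left.mp (hdisj j k hj) hja hk
          by_cases hik : i = k
          · subst hik
            refine (ih.2 i).tail ?_
            refine ⟨a, Or.inl haR, Or.inr ⟨i, hk⟩, Or.inl ⟨haR, htrR⟩, ?_⟩
            intro j
            by_cases hj : j = i
            · subst hj; exact Or.inl ⟨hk, by simpa using htrk⟩
            · exact Or.inr ⟨hnot j hj, by simp [Function.update_of_ne hj]⟩
          · have hci : c.2 i = b.2 i := by
              rcases h3 i with ⟨h, _⟩ | ⟨_, h⟩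
              · exact absurd h (hnot i hik)
              · exact h
            set f : ∀ j, T j := Function.update (fun j => (N j).init) i (b.2 i) with hfdef
            have hf : Function.update f k ((N k).init) = f := by
              funext j
              by_cases hj : j = k
              · subst hj
                simp [hfdef, Function.update_of_ne (Ne.symm hik)]
              · simp [Function.update_of_ne hj]
            have reach2 : Relation.ReflTransGen (netLTS R N).Step
                (b.1, f) (b.1, Function.update f k (b.2 k)) := by
              have := lift_local R N hdisj k (ih.1 k) b.1 f
              rwa [hf] at this
            have step3 : (netLTS R N).Step
                (b.1, Function.update f k (b.2 k)) (c.1, f) := by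
              refine ⟨a, Or.inl haR, Or.inr ⟨k, hk⟩, Or.inl ⟨haR, htrR⟩, ?_⟩
              intro j
              by_cases hj : j = k
              · subst hj
                refine Or.inl ⟨hk, ?_⟩
                have : f j = (N j).init := by
                  simp [hfdef, Function.update_of_ne (Ne.symm hik)]
                simpa [this, ← hck] using htrk
              · exact Or.inr ⟨hnot j hj, by simp [Function.update_of_ne hj]⟩
            have : (netLTS R N).Reachable (c.1, f) :=
              (((ih.2 i).trans reach2).tail step3)
            rw [show Function.update (fun j => (N j).init) i (c.2 i) = f by
              rw [hci]]
            exact this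
        · push_neg at hex
          have hci : ∀ j, c.2 j = b.2 j := by
            intro j
            rcases h3 j with ⟨h, _⟩ | ⟨_, h⟩
            · exact absurd h (hex j)
            · exact h
          rw [show Function.update (fun j => (N j).init) i (c.2 i)
              = Function.update (fun j => (N j).init) i (b.2 i) by rw [hci i]]
          refine (ih.2 i).tail ?_
          refine ⟨a, Or.inl haR, Or.inl haR, Or.inl ⟨haR, htrR⟩, ?_⟩
          exact fun j => Or.inr ⟨hex j, rfl⟩
      · have hb1 : c.1 = b.1 := by
          rcases h2 with ⟨h, _⟩ | ⟨_, h⟩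
          · exact absurd h haR
          · exact h
        have hex : ∃ k, a ∈ (N k).acts := by
          rcases h1 with h | h
          · exact absurd h haR
          · exact h
        obtain ⟨k, hk⟩ := hex
        have hnot : ∀ j, j ≠ k → a ∉ (N j).acts := fun j hj hja =>
          Set.disjoint_left.mp (hdisj j k hj) hja hk
        have htrk : (N k).tr (b.2 k) a (c.2 k) := by
          rcases h3 k with ⟨_, h⟩ | ⟨h, _⟩
          · exact h
          · exact absurd hk h
        by_cases hik : i = k
        · subst hik
          rw [hb1]
          refine (ih.2 i).tail ?_
          refine ⟨a, Or.inr (Set.mem_iUnion.2 ⟨i, hk⟩), Or.inr ⟨i, hk⟩,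
            Or.inr ⟨haR, rfl⟩, ?_⟩
          intro j
          by_cases hj : j = i
          · subst hj; exact Or.inl ⟨hk, by simpa using htrk⟩
          · exact Or.inr ⟨hnot j hj, by simp [Function.update_of_ne hj]⟩
        · have hci : c.2 i = b.2 i := by
            rcases h3 i with ⟨h, _⟩ | ⟨_, h⟩
            · exact absurd h (hnot i hik)
            · exact h
          rw [hb1, hci]
          exact ih.2 i

/-- in a two-level live-reset tree topology with children
pairwise sharing no actions, if a global state `s` is reachable, and the
`i`-th coordinate of `s` is reachable in `M i` using only local actions, then
the global state with the same root coordinate, `i`-th coordinate `s.2 i`, and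
all other children in their initial states is also reachable in the full
product. -/
theorem reschedule_one_child {n : ℕ} {SR A P : Type} {T : Fin n → Type}
    (R : LTS SR A P) (N : ∀ i, LTS (T i) A P)
    (hlr : ∀ i, LiveResetChild R (N i))
    (hdisj : ChildrenDisjoint N)
    (s : SR × ∀ i, T i) (i : Fin n)
    (hs : (netLTS R N).Reachable s)
    (hi : LocalReach R (N i) (s.2 i)) :
    (netLTS R N).Reachable
      (s.1, Function.update (fun j => (N j).init) i (s.2 i)) := by
  exact (net_invariant R N hlr hdisj s hs).2 i
end
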